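/- For a graded poset P of rank at least 2, the ab-index satisfies the recursion \Psi(P) = (a-b)^{\rho(P)-1} + \sum_{\hat{0} < x < \hat{1}} (a-b)^{\rho(x)-1} \cdot b \cdot \Psi([x,\hat{1}]). -/

import Mathlib

open Finset

/-- The ring `ℤ⟨a,b⟩` of noncommutative polynomials in the variables `a` and `b`,
realized as the monoid algebra of the free monoid on two letters
(`false` encodes the letter `a` and `true` the letter `b`). -/
abbrev AB : Type := MonoidAlgebra ℤ (FreeMonoid Bool)

/-- The variable `a`. -/
noncomputable def aV : AB := MonoidAlgebra.single (FreeMonoid.ofList [false]) 1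

/-- The variable `b`. -/
noncomputable def bV : AB := MonoidAlgebra.single (FreeMonoid.ofList [true]) 1

/-- The `ab`-monomial `u_S` of degree `n`, with `b` in the positions of `S`. -/
def word (n : ℕ) (S : Finset ℕ) : FreeMonoid Bool :=
  FreeMonoid.ofList (List.ofFn fun i : Fin n => decide ((i : ℕ) + 1 ∈ S))

/-- The flag `f`-vector entry `f_S`. -/
noncomputable def flagF (P : Type*) [PartialOrder P] (ρ : P → ℕ) (S : Finset ℕ) : ℤ :=
  ({c : Finset P | IsChain (· ≤ ·) (↑c : Set P) ∧ c.image ρ = S} : Set (Finset P)).ncard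

/-- The flag `h`-vector entry `h_S`. -/
noncomputable def flagH (P : Type*) [PartialOrder P] (ρ : P → ℕ) (S : Finset ℕ) : ℤ :=
  ∑ T ∈ S.powerset, (-1) ^ (S.card - T.card) * flagF P ρ T

/-- The `ab`-index `Ψ(P) = ∑_S h_S u_S` of a poset `P` of rank `n+1` with rank
function `ρ` (the elements of ranks `1,…,n` are the proper part of `P`). -/
noncomputable def Psi (P : Type*) [PartialOrder P] (ρ : P → ℕ) (n : ℕ) : AB :=
  ∑ S ∈ (Finset.Icc 1 n).powerset, MonoidAlgebra.single (word n S) (flagH P ρ S)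

open scoped Classical

noncomputable def mono (l : List Bool) : AB := MonoidAlgebra.single (FreeMonoid.ofList l) 1

lemma mono_append (l₁ l₂ : List Bool) : mono (l₁ ++ l₂) = mono l₁ * mono l₂ := by
  simp [mono, MonoidAlgebra.single_mul_single]

lemma mono_nil : mono [] = 1 := by
  simp [mono]
  rfl

noncomputable def oneL (c : Bool) : AB := if c then bV else aV

noncomputable def lett (c : Bool) : AB := if c then bV else aV - bV

noncomputable def sgn {n : ℕ} (t g : Fin n → Bool) : ℤ :=
  ∏ i : Fin n, (if t i = g i then (1 : ℤ) else -1)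

lemma expand (n : ℕ) (t : Fin n → Bool) :
    (List.ofFn fun i => lett (t i)).prod
      = ∑ g ∈ univ.filter (fun g : Fin n → Bool => ∀ i, t i = true → g i = true),
          sgn t g • (List.ofFn fun i => oneL (g i)).prod := by
  induction n with
  | zero =>
      simp [sgn, List.ofFn_zero, Finset.filter_true_of_mem]
  | succ n ih =>
      rw [Finset.sum_filter]
      rw [← Equiv.sum_comp (Fin.consEquiv (fun _ => Bool))]
      rw [Fintype.sum_prod_type]
      have key : ∀ (c : Bool) (g' : Fin n → Bool),
          (if (∀ i, t i = true → (Fin.consEquiv (fun _ => Bool)) (c, g') i = true) then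
            sgn t ((Fin.consEquiv (fun _ => Bool)) (c, g')) •
              (List.ofFn fun i => oneL (((Fin.consEquiv (fun _ => Bool)) (c, g')) i)).prod else 0)
          = (if (t 0 = true → c = true) then
              (if t 0 = c then (1:ℤ) else -1) • (oneL c *
                (if (∀ i, (t ∘ Fin.succ) i = true → g' i = true) then
                  sgn (t ∘ Fin.succ) g' • (List.ofFn fun i => oneL (g' i)).prod else 0)) else 0) := by
        intro c g'
        have hc : (Fin.consEquiv (fun _ => Bool)) (c, g') = Fin.cons c g' := rfl
        rw [hc]
        simp only [Fin.forall_fin_succ, Fin.cons_zero, Fin.cons_succ, Function.comp]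
        by_cases h0 : t 0 = true → c = true
        · by_cases h1 : ∀ i : Fin n, t i.succ = true → g' i = true
          · rw [if_pos ⟨h0, h1⟩, if_pos h0, if_pos h1]
            rw [sgn, Fin.prod_univ_succ]
            simp only [Fin.cons_zero, Fin.cons_succ]
            rw [List.ofFn_succ]
            simp only [Fin.cons_zero, Fin.cons_succ, List.prod_cons]
            rw [mul_smul, smul_smul, mul_comm]
            rw [← smul_smul, smul_comm]
            congr 1
            rw [mul_smul_comm]
            rfl
          · rw [if_neg (by tauto), if_pos h0, if_neg h1]
            simp
        · rw [if_neg (by tauto), if_neg h0]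
      rw [Finset.sum_congr rfl (fun c _ => Finset.sum_congr rfl (fun g' _ => key c g'))]
      have pull : ∀ c : Bool,
          (∑ g' : Fin n → Bool, (if (t 0 = true → c = true) then
              (if t 0 = c then (1:ℤ) else -1) • (oneL c *
                (if (∀ i, (t ∘ Fin.succ) i = true → g' i = true) then
                  sgn (t ∘ Fin.succ) g' • (List.ofFn fun i => oneL (g' i)).prod else 0)) else 0))
          = (if (t 0 = true → c = true) then
              (if t 0 = c then (1:ℤ) else -1) • (oneL c *
                (List.ofFn fun i => lett (t i.succ)).prod) else 0) := by
        intro c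
        by_cases h0 : t 0 = true → c = true
        · simp only [if_pos h0]
          rw [← Finset.smul_sum, ← Finset.mul_sum, ← Finset.sum_filter]
          rw [← ih (t ∘ Fin.succ)]
          rfl
        · simp [if_neg h0]
      rw [Finset.sum_congr rfl (fun c _ => pull c)]
      rw [List.ofFn_succ, List.prod_cons]
      rw [Fintype.sum_bool]
      by_cases h : t 0 = true
      · simp [h, lett, oneL]
      · simp only [Bool.not_eq_true] at h
        simp [h, lett, oneL, sub_mul, sub_smul]
        abel

lemma mono_eq (l : List Bool) : mono l = (l.map oneL).prod := by
  induction l with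
  | nil => simp [mono_nil]
  | cons c l ih =>
      have : (c :: l) = [c] ++ l := rfl
      rw [this, mono_append, ih, List.map_append, List.prod_append]
      congr 1
      cases c <;> simp [oneL, mono, aV, bV]

lemma mono_ofFn {n : ℕ} (g : Fin n → Bool) :
    mono (List.ofFn g) = (List.ofFn fun i => oneL (g i)).prod := by
  rw [mono_eq, List.map_ofFn]
  rfl

lemma sgn_eq {n : ℕ} {T S : Finset ℕ} (hS : S ⊆ Icc 1 n) (hTS : T ⊆ S) :
    sgn (fun i : Fin n => decide ((i:ℕ)+1 ∈ T)) (fun i : Fin n => decide ((i:ℕ)+1 ∈ S))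
      = (-1 : ℤ) ^ (S.card - T.card) := by
  rw [sgn, Finset.prod_ite (fun _ => (1:ℤ)) (fun _ => (-1:ℤ)), Finset.prod_const,
    Finset.prod_const, one_pow, one_mul]
  congr 1
  rw [← Finset.card_sdiff_of_subset hTS]
  apply Finset.card_nbij (fun i : Fin n => (i:ℕ)+1)
  · intro i hi
    simp only [Finset.mem_coe, Finset.mem_filter, Finset.mem_univ, true_and] at hi
    simp only [Finset.mem_coe, Finset.mem_sdiff]
    by_cases h1 : (i:ℕ)+1 ∈ S
    · refine ⟨h1, fun h2 => hi ?_⟩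
      simp [h1, h2]
    · exfalso
      have h2 : (i:ℕ)+1 ∉ T := fun h => h1 (hTS h)
      exact hi (by simp [h1, h2])
  · intro i _ j _ h
    simpa [Fin.ext_iff] using h
  · intro a ha
    simp only [Finset.coe_sdiff, Set.mem_diff, Finset.mem_coe] at ha
    have haI := hS ha.1
    simp only [Finset.mem_Icc] at haI
    refine ⟨⟨a - 1, by omega⟩, ?_, ?_⟩
    · simp only [Finset.coe_filter, Set.mem_setOf_eq, Finset.mem_univ, true_and]
      have : a - 1 + 1 = a := by omega
      simp only [this]
      simp [ha.1, ha.2]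
    · simp only []
      omega

noncomputable def Omega (n : ℕ) (f : ℕ → Prop) : AB :=
  (List.ofFn fun i : Fin n => if f ((i:ℕ)+1) then bV else aV - bV).prod

lemma K2 {n : ℕ} {T : Finset ℕ} (hT : T ⊆ Icc 1 n) :
    Omega n (· ∈ T)
      = ∑ S ∈ (Icc 1 n).powerset.filter (T ⊆ ·),
          ((-1:ℤ)) ^ (S.card - T.card) • mono (List.ofFn fun i : Fin n => decide ((i:ℕ)+1 ∈ S)) := by
  have h1 : Omega n (· ∈ T) = (List.ofFn fun i : Fin n => lett (decide ((i:ℕ)+1 ∈ T))).prod := by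
    unfold Omega
    congr 1
    exact congrArg List.ofFn (funext fun i => by simp [lett])
  rw [h1, expand]
  apply Finset.sum_nbij' (i := fun g : Fin n → Bool => (univ.filter (fun i : Fin n => g i = true)).image (fun i : Fin n => (i:ℕ)+1))
    (j := fun S : Finset ℕ => fun i : Fin n => decide ((i:ℕ)+1 ∈ S))
  · intro g hg
    simp only [Finset.mem_filter, Finset.mem_univ, true_and] at hg
    simp only [Finset.mem_filter, Finset.mem_powerset]
    constructor
    · intro a ha
      simp only [Finset.mem_image, Finset.mem_filter, Finset.mem_univ, true_and] at ha
      obtain ⟨i, _, rfl⟩ := ha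
      simp only [Finset.mem_Icc]
      omega
    · intro a ha
      have haI := hT ha
      simp only [Finset.mem_Icc] at haI
      simp only [Finset.mem_image, Finset.mem_filter, Finset.mem_univ, true_and]
      refine ⟨⟨a-1, by omega⟩, hg _ ?_, by show a - 1 + 1 = a; omega⟩
      show decide (a - 1 + 1 ∈ T) = true
      have : a - 1 + 1 = a := by omega
      rw [this]
      simpa using ha
  · intro S hS
    simp only [Finset.mem_filter, Finset.mem_powerset] at hS
    simp only [Finset.mem_filter, Finset.mem_univ, true_and]
    intro i hi
    simp only [decide_eq_true_eq] at hi ⊢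
    exact hS.2 hi
  · intro g hg
    funext i
    simp only [Finset.mem_image, Finset.mem_filter, Finset.mem_univ, true_and]
    by_cases h : g i = true
    · rw [decide_eq_true (show ∃ j : Fin n, g j = true ∧ (j:ℕ)+1 = (i:ℕ)+1 from ⟨i, h, rfl⟩), h]
    · have hf : g i = false := by simpa using h
      rw [hf]
      apply decide_eq_false
      rintro ⟨j, hj, hji⟩
      have : j = i := by
        apply Fin.ext
        omega
      exact h (this ▸ hj)
  · intro S hS
    simp only [Finset.mem_filter, Finset.mem_powerset] at hS
    ext a
    simp only [Finset.mem_image, Finset.mem_filter, Finset.mem_univ, true_and,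
      decide_eq_true_eq]
    constructor
    · rintro ⟨i, hi, rfl⟩
      exact hi
    · intro ha
      have haI := hS.1 ha
      simp only [Finset.mem_Icc] at haI
      refine ⟨⟨a-1, by omega⟩, ?_, by show a - 1 + 1 = a; omega⟩
      show a - 1 + 1 ∈ S
      have : a - 1 + 1 = a := by omega
      rw [this]
      exact ha
  · intro g hg
    simp only [Finset.mem_filter, Finset.mem_univ, true_and] at hg
    set S := (univ.filter (fun i : Fin n => g i = true)).image (fun i : Fin n => (i:ℕ)+1) with hSdef
    have hg' : (fun i : Fin n => decide ((i:ℕ)+1 ∈ S)) = g := by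
      funext i
      simp only [hSdef, Finset.mem_image, Finset.mem_filter, Finset.mem_univ, true_and]
      by_cases h : g i = true
      · rw [decide_eq_true (show ∃ j : Fin n, g j = true ∧ (j:ℕ)+1 = (i:ℕ)+1 from ⟨i, h, rfl⟩), h]
      · have hf : g i = false := by simpa using h
        rw [hf]
        apply decide_eq_false
        rintro ⟨j, hj, hji⟩
        have : j = i := by apply Fin.ext; omega
        exact h (this ▸ hj)
    have hSsub : S ⊆ Icc 1 n := by
      intro a ha
      simp only [hSdef, Finset.mem_image, Finset.mem_filter, Finset.mem_univ, true_and] at ha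
      obtain ⟨i, _, rfl⟩ := ha
      simp only [Finset.mem_Icc]
      omega
    have hTS : T ⊆ S := by
      intro a ha
      have haI := hT ha
      simp only [Finset.mem_Icc] at haI
      simp only [hSdef, Finset.mem_image, Finset.mem_filter, Finset.mem_univ, true_and]
      refine ⟨⟨a-1, by omega⟩, hg _ ?_, by show a - 1 + 1 = a; omega⟩
      show decide (a - 1 + 1 ∈ T) = true
      have : a - 1 + 1 = a := by omega
      rw [this]
      simpa using ha
    rw [← sgn_eq hSsub hTS, hg', mono_ofFn]

lemma PsiF (P : Type*) [PartialOrder P] (ρ : P → ℕ) (n : ℕ) :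
    Psi P ρ n = ∑ T ∈ (Icc 1 n).powerset, flagF P ρ T • Omega n (· ∈ T) := by
  unfold Psi
  have step1 : ∀ S : Finset ℕ,
      MonoidAlgebra.single (word n S) (flagH P ρ S)
        = ∑ T ∈ S.powerset, ((-1:ℤ) ^ (S.card - T.card) * flagF P ρ T) •
            mono (List.ofFn fun i : Fin n => decide ((i:ℕ)+1 ∈ S)) := by
    intro S
    rw [← Finset.sum_smul, ← flagH]
    rw [mono]
    rw [MonoidAlgebra.smul_single']
    rw [mul_one]
    rfl
  rw [Finset.sum_congr rfl fun S _ => step1 S]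
  -- swap the order of summation
  rw [Finset.sum_comm' (t' := (Icc 1 n).powerset)
    (s' := fun T => (Icc 1 n).powerset.filter (T ⊆ ·)) ?hcomm]
  case hcomm =>
    intro S T
    simp only [Finset.mem_powerset, Finset.mem_filter]
    constructor
    · intro h
      exact ⟨⟨h.1, h.2⟩, h.2.trans h.1⟩
    · intro h
      exact ⟨h.1.1, h.1.2⟩
  refine Finset.sum_congr rfl fun T hT => ?_
  simp only [Finset.mem_powerset] at hT
  rw [K2 hT, Finset.smul_sum]
  refine Finset.sum_congr rfl fun S hS => ?_
  rw [mul_comm, mul_smul]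

lemma Omega_congr {n : ℕ} {f g : ℕ → Prop} (h : ∀ i, 1 ≤ i → i ≤ n → (f i ↔ g i)) :
    Omega n f = Omega n g := by
  unfold Omega
  congr 1
  exact congrArg List.ofFn (funext fun i => if_congr (h _ (by omega) (by omega)) rfl rfl)

lemma Omega_empty (n : ℕ) : Omega n (· ∈ (∅ : Finset ℕ)) = (aV - bV) ^ n := by
  unfold Omega
  rw [← List.prod_replicate n (aV - bV), ← List.ofFn_const n (aV - bV)]
  congr 1
  exact congrArg List.ofFn (funext fun i => by simp)

lemma Omega_add (p q : ℕ) (f : ℕ → Prop) :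
    Omega (p + q) f = Omega p f * Omega q (fun j => f (p + j)) := by
  unfold Omega
  rw [List.ofFn_add, List.prod_append]
  congr 2

lemma Omega_one (f : ℕ → Prop) : Omega 1 f = if f 1 then bV else aV - bV := by
  unfold Omega
  simp

lemma Omega_split {n m : ℕ} (hm1 : 1 ≤ m) (hmn : m ≤ n) (T' : Finset ℕ) :
    (aV - bV) ^ (m - 1) * bV * Omega (n - m) (· ∈ T')
      = Omega n (· ∈ insert m (T'.image (· + m))) := by
  obtain ⟨k, rfl⟩ : ∃ k, n = m + k := ⟨n - m, by omega⟩
  obtain ⟨j, rfl⟩ : ∃ j, m = j + 1 := ⟨m - 1, by omega⟩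
  have h1 : j + 1 + k - (j + 1) = k := by omega
  have h2 : j + 1 + k = j + (1 + k) := by omega
  rw [h1, h2, Omega_add, Omega_add, Omega_one]
  have e1 : Omega j (· ∈ insert (j+1) (T'.image (· + (j+1)))) = (aV - bV) ^ j := by
    rw [Omega_congr (g := (· ∈ (∅ : Finset ℕ))) ?_, Omega_empty]
    intro i hi1 hij
    simp only [Finset.mem_insert, Finset.mem_image, Finset.notMem_empty, iff_false]
    push_neg
    constructor
    · omega
    · intro t ht
      omega
  have e3 : Omega k (fun a => (j + (1 + a)) ∈ insert (j+1) (T'.image (· + (j+1))))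
      = Omega k (· ∈ T') := by
    apply Omega_congr
    intro i hi1 hik
    simp only [Finset.mem_insert, Finset.mem_image]
    constructor
    · rintro (h | ⟨t, ht, hteq⟩)
      · omega
      · have : t = i := by omega
        exact this ▸ ht
    · intro h
      exact Or.inr ⟨i, h, by omega⟩
  rw [e1, e3, if_pos (Finset.mem_insert_self _ _)]
  have : j + 1 - 1 = j := by omega
  rw [this, mul_assoc]

lemma flagF_card (P : Type*) [Fintype P] [PartialOrder P] (ρ : P → ℕ) (S : Finset ℕ) :
    flagF P ρ S
      = ((univ.filter fun c : Finset P =>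
          IsChain (· ≤ ·) (↑c : Set P) ∧ c.image ρ = S).card : ℤ) := by
  unfold flagF
  rw [show {c : Finset P | IsChain (· ≤ ·) (↑c : Set P) ∧ c.image ρ = S}
      = ↑(univ.filter fun c : Finset P => IsChain (· ≤ ·) (↑c : Set P) ∧ c.image ρ = S) by
    ext c; simp]
  rw [Set.ncard_coe_finset]

lemma flagF_empty (P : Type*) [Fintype P] [PartialOrder P] (ρ : P → ℕ) :
    flagF P ρ (∅ : Finset ℕ) = 1 := by
  rw [flagF_card]
  rw [show (univ.filter fun c : Finset P =>
      IsChain (· ≤ ·) (↑c : Set P) ∧ c.image ρ = (∅ : Finset ℕ)) = {∅} by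
    ext c
    simp only [Finset.mem_filter, Finset.mem_univ, true_and, Finset.mem_singleton,
      Finset.image_eq_empty]
    constructor
    · rintro ⟨_, h⟩; exact h
    · rintro rfl
      exact ⟨by simp, rfl⟩]
  simp

lemma flagF_decomp (P : Type*) [Fintype P] [PartialOrder P] (ρ : P → ℕ)
    (hstrict : ∀ x y : P, x < y → ρ x < ρ y) (T : Finset ℕ) (m : ℕ)
    (hmT : m ∈ T) (hmin : ∀ t ∈ T, m ≤ t) :
    flagF P ρ T = ∑ x ∈ univ.filter (fun x : P => ρ x = m),
      flagF {y : P // x ≤ y} (fun y => ρ y.1 - ρ x) ((T.erase m).image (· - m)) := by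
  have hT'pos : ∀ s ∈ (T.erase m).image (· - m), 1 ≤ s := by
    intro s hs
    simp only [Finset.mem_image, Finset.mem_erase] at hs
    obtain ⟨t, ⟨htm, htT⟩, rfl⟩ := hs
    have := hmin t htT
    omega
  rw [flagF_card]
  have : ∀ x ∈ univ.filter (fun x : P => ρ x = m),
      flagF {y : P // x ≤ y} (fun y => ρ y.1 - ρ x) ((T.erase m).image (· - m))
        = ((univ.filter fun c : Finset {y : P // x ≤ y} =>
            IsChain (· ≤ ·) (↑c : Set {y : P // x ≤ y}) ∧
              c.image (fun y => ρ y.1 - ρ x) = (T.erase m).image (· - m)).card : ℤ) :=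
    fun x _ => flagF_card _ _ _
  rw [Finset.sum_congr rfl this, ← Nat.cast_sum]
  congr 1
  rw [← Finset.card_sigma]
  symm
  apply Finset.card_nbij (i := fun p : Σ x : P, Finset {y : P // x ≤ y} =>
    insert p.1 (p.2.image Subtype.val))
  -- maps to
  · rintro ⟨x, c'⟩ hp
    simp only [Finset.mem_coe, Finset.mem_sigma, Finset.mem_filter, Finset.mem_univ, true_and] at hp
    obtain ⟨hxm, hchain, himg⟩ := hp
    have hgt : ∀ y ∈ c'.image Subtype.val, m < ρ y := by
      intro y hy
      simp only [Finset.mem_image] at hy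
      obtain ⟨z, hz, rfl⟩ := hy
      have : ρ z.1 - ρ x ∈ (T.erase m).image (· - m) := by
        rw [← himg]; exact Finset.mem_image_of_mem _ hz
      have := hT'pos _ this
      omega
    simp only [Finset.mem_coe, Finset.mem_filter, Finset.mem_univ, true_and]
    constructor
    · rw [Finset.coe_insert, Finset.coe_image]
      apply IsChain.insert
      · exact IsChain.image_of_map_rel (· ≤ ·) (· ≤ ·) Subtype.val (fun a b h => h) hchain
      · intro b hb _
        obtain ⟨z, _, rfl⟩ := hb
        exact Or.inl z.2
    · rw [Finset.image_insert, hxm, Finset.image_image]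
      have step : c'.image (ρ ∘ Subtype.val) = ((T.erase m).image (· - m)).image (· + m) := by
        rw [← himg, Finset.image_image]
        apply Finset.image_congr
        intro z hz
        simp only [Function.comp_apply]
        have : ρ z.1 - ρ x ∈ (T.erase m).image (· - m) := by
          rw [← himg]; exact Finset.mem_image_of_mem _ (Finset.mem_coe.1 hz)
        have := hT'pos _ this
        omega
      rw [step, Finset.image_image]
      have step2 : (T.erase m).image ((· + m) ∘ (· - m)) = T.erase m := by
        rw [show ((· + m) ∘ (· - m)) = fun t : ℕ => t - m + m from rfl]
        have : ∀ t ∈ T.erase m, t - m + m = t := by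
          intro t ht
          simp only [Finset.mem_erase] at ht
          have := hmin t ht.2
          omega
        calc (T.erase m).image (fun t => t - m + m) = (T.erase m).image id :=
              Finset.image_congr (fun t ht => this t (Finset.mem_coe.1 ht))
          _ = T.erase m := Finset.image_id
      rw [step2, Finset.insert_erase hmT]
  -- injective
  · rintro ⟨x, c'⟩ hp ⟨x2, c2⟩ hp2 heq
    simp only [Finset.mem_coe, Finset.mem_sigma, Finset.mem_filter, Finset.mem_univ,
      true_and] at hp hp2
    obtain ⟨hxm, hchain, himg⟩ := hp
    obtain ⟨hxm2, hchain2, himg2⟩ := hp2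
    have hgt : ∀ (x0 : P) (c0 : Finset {y : P // x0 ≤ y}), ρ x0 = m →
        c0.image (fun y => ρ y.1 - ρ x0) = (T.erase m).image (· - m) →
        ∀ y ∈ c0.image Subtype.val, m < ρ y := by
      intro x0 c0 hx0m himg0 y hy
      simp only [Finset.mem_image] at hy
      obtain ⟨z, hz, rfl⟩ := hy
      have : ρ z.1 - ρ x0 ∈ (T.erase m).image (· - m) := by
        rw [← himg0]; exact Finset.mem_image_of_mem _ hz
      have := hT'pos _ this
      omega
    have heq' : insert x (c'.image Subtype.val) = insert x2 (c2.image Subtype.val) := heq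
    have hx12 : x = x2 := by
      have hx1 : x ∈ insert x2 (c2.image Subtype.val) := by
        rw [← heq']; exact Finset.mem_insert_self _ _
      rcases Finset.mem_insert.1 hx1 with h | h
      · exact h
      · exfalso
        have := hgt x2 c2 hxm2 himg2 x h
        omega
    subst hx12
    have hxnot : x ∉ c'.image Subtype.val := fun h => by
      have := hgt x c' hxm himg x h; omega
    have hxnot2 : x ∉ c2.image Subtype.val := fun h => by
      have := hgt x c2 hxm2 himg2 x h; omega
    have himgeq : c'.image Subtype.val = c2.image Subtype.val := by
      have h1 := congrArg (fun s : Finset P => s.erase x) heq'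
      simpa [Finset.erase_insert hxnot, Finset.erase_insert hxnot2] using h1
    have : c' = c2 := Finset.image_injective Subtype.coe_injective himgeq
    simp [this]
  -- surjective
  · intro c hc
    simp only [Finset.coe_filter, Set.mem_setOf_eq, Finset.mem_univ, true_and] at hc
    obtain ⟨hchain, himg⟩ := hc
    have hmx : ∃ x ∈ c, ρ x = m := by
      have : m ∈ c.image ρ := himg ▸ hmT
      simpa using this
    obtain ⟨x, hxc, hxm⟩ := hmx
    have hmin' : ∀ y ∈ c, x ≤ y := by
      intro y hy
      by_cases hxy : y = x
      · exact hxy ▸ le_refl x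
      rcases hchain hxc hy (Ne.symm hxy) with h | h
      · exact h
      · exfalso
        have hlt : y < x := lt_of_le_of_ne h hxy
        have := hstrict y x hlt
        have : ρ y ∈ T := himg ▸ Finset.mem_image_of_mem ρ hy
        have := hmin _ this
        omega
    have himval : ((c.erase x).subtype (fun y => x ≤ y)).image Subtype.val = c.erase x := by
      ext y
      simp only [Finset.mem_image, Finset.mem_subtype]
      constructor
      · rintro ⟨z, hz, rfl⟩; exact hz
      · intro hy; exact ⟨⟨y, hmin' y (Finset.mem_of_mem_erase hy)⟩, hy, rfl⟩
    refine ⟨⟨x, (c.erase x).subtype (fun y => x ≤ y)⟩, ?_, ?_⟩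
    · simp only [Finset.mem_coe, Finset.mem_sigma, Finset.mem_filter, Finset.mem_univ, true_and]
      refine ⟨hxm, ?_, ?_⟩
      · -- chain in subtype
        intro y hy z hz hne
        have hy' : y.1 ∈ c := Finset.mem_of_mem_erase (Finset.mem_subtype.1 (Finset.mem_coe.1 hy))
        have hz' : z.1 ∈ c := Finset.mem_of_mem_erase (Finset.mem_subtype.1 (Finset.mem_coe.1 hz))
        have hne' : y.1 ≠ z.1 := fun h => hne (Subtype.ext h)
        rcases hchain hy' hz' hne' with h | h
        · exact Or.inl h
        · exact Or.inr h
      · -- image of ranks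
        have e1 : ((c.erase x).subtype (fun y => x ≤ y)).image (fun y => ρ y.1 - ρ x)
            = (((c.erase x).subtype (fun y => x ≤ y)).image Subtype.val).image
                (fun z => ρ z - ρ x) := by
          rw [Finset.image_image]
          rfl
        rw [e1, himval, hxm]
        have e2 : (c.erase x).image ρ = T.erase m := by
          ext t
          simp only [Finset.mem_image, Finset.mem_erase]
          constructor
          · rintro ⟨y, ⟨hyx, hyc⟩, rfl⟩
            refine ⟨?_, himg ▸ Finset.mem_image_of_mem ρ hyc⟩
            intro hym
            rcases hchain hxc hyc (fun h => hyx h.symm) with h | h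
            · have := hstrict x y (lt_of_le_of_ne h (fun h' => hyx h'.symm))
              omega
            · have := hstrict y x (lt_of_le_of_ne h hyx)
              omega
          · rintro ⟨htm, htT⟩
            have : t ∈ c.image ρ := himg ▸ htT
            simp only [Finset.mem_image] at this
            obtain ⟨y, hyc, rfl⟩ := this
            exact ⟨y, ⟨fun h => htm (h ▸ hxm), hyc⟩, rfl⟩
        rw [← e2, Finset.image_image]
        rfl
    · show insert x (((c.erase x).subtype (fun y => x ≤ y)).image Subtype.val) = c
      rw [himval, Finset.insert_erase hxc]


/-- Stanley's recursion for the `ab`-index of a graded poset. -/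
theorem Psi_recursion (n : ℕ) (P : Type*) [Fintype P] [PartialOrder P]
    [BoundedOrder P] (ρ : P → ℕ)
    (hbot : ρ ⊥ = 0) (htop : ρ ⊤ = n + 1)
    (hstrict : ∀ x y : P, x < y → ρ x < ρ y)
    (hcov : ∀ x y : P, x ⋖ y → ρ y = ρ x + 1) :
    Psi P ρ n =
      (aV - bV) ^ n +
        ∑ x ∈ Finset.univ.filter (fun x : P => ⊥ < x ∧ x < ⊤),
          (aV - bV) ^ (ρ x - 1) * bV *
            Psi {y : P // x ≤ y} (fun y => ρ y.1 - ρ x) (n - ρ x) := by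
  have rank_iff : ∀ x : P, (⊥ < x ∧ x < ⊤) ↔ (1 ≤ ρ x ∧ ρ x ≤ n) := by
    intro x
    constructor
    · rintro ⟨hx1, hx2⟩
      have h1 := hstrict ⊥ x hx1
      have h2 := hstrict x ⊤ hx2
      omega
    · rintro ⟨hx1, hx2⟩
      constructor
      · rw [bot_lt_iff_ne_bot]
        intro h; rw [h, hbot] at hx1; omega
      · rw [lt_top_iff_ne_top]
        intro h; rw [h, htop] at hx2; omega
  rw [PsiF P ρ n]
  have hemp : (∅ : Finset ℕ) ∈ (Icc 1 n).powerset := by simp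
  rw [← Finset.add_sum_erase _ _ hemp, flagF_empty, one_smul, Omega_empty]
  congr 1
  have step : ∀ x ∈ univ.filter (fun x : P => ⊥ < x ∧ x < ⊤),
      (aV - bV) ^ (ρ x - 1) * bV *
          Psi {y : P // x ≤ y} (fun y => ρ y.1 - ρ x) (n - ρ x)
        = ∑ T ∈ ((Icc 1 n).powerset.erase ∅).filter
              (fun T => ρ x ∈ T ∧ ∀ t ∈ T, ρ x ≤ t),
            flagF {y : P // x ≤ y} (fun y => ρ y.1 - ρ x)
              ((T.erase (ρ x)).image (· - ρ x)) • Omega n (· ∈ T) := by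
    intro x hx
    simp only [Finset.mem_filter, Finset.mem_univ, true_and] at hx
    obtain ⟨h1, h2⟩ := (rank_iff x).1 hx
    rw [PsiF, Finset.mul_sum]
    apply Finset.sum_nbij' (i := fun T' : Finset ℕ => insert (ρ x) (T'.image (· + ρ x)))
      (j := fun T : Finset ℕ => (T.erase (ρ x)).image (· - ρ x))
    · intro T' hT'
      simp only [Finset.mem_powerset] at hT'
      simp only [Finset.mem_filter, Finset.mem_erase, Finset.mem_powerset]
      refine ⟨⟨?_, ?_⟩, Finset.mem_insert_self _ _, ?_⟩
      · intro h
        exact absurd (Finset.mem_insert_self (ρ x) (T'.image (· + ρ x))) (h ▸ Finset.notMem_empty _)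
      · intro a ha
        rcases Finset.mem_insert.1 ha with rfl | ha
        · simp only [Finset.mem_Icc]; omega
        · simp only [Finset.mem_image] at ha
          obtain ⟨t, ht, rfl⟩ := ha
          have := hT' ht
          simp only [Finset.mem_Icc] at this ⊢
          omega
      · intro t ht
        rcases Finset.mem_insert.1 ht with rfl | ht
        · exact le_refl _
        · simp only [Finset.mem_image] at ht
          obtain ⟨s, hs, rfl⟩ := ht
          omega
    · intro T hT
      simp only [Finset.mem_filter, Finset.mem_erase, Finset.mem_powerset] at hT
      obtain ⟨⟨hne, hsub⟩, hmem, hlb⟩ := hT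
      simp only [Finset.mem_powerset]
      intro a ha
      simp only [Finset.mem_image, Finset.mem_erase] at ha
      obtain ⟨t, ⟨htm, htT⟩, rfl⟩ := ha
      have h3 := hsub htT
      have h4 := hlb t htT
      simp only [Finset.mem_Icc] at h3 ⊢
      omega
    · intro T' hT'
      simp only [Finset.mem_powerset] at hT'
      have hnotmem : ρ x ∉ T'.image (· + ρ x) := by
        simp only [Finset.mem_image]
        rintro ⟨t, ht, hteq⟩
        have := hT' ht
        simp only [Finset.mem_Icc] at this
        omega
      rw [Finset.erase_insert hnotmem, Finset.image_image]
      calc T'.image ((· - ρ x) ∘ (· + ρ x)) = T'.image id := by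
            apply Finset.image_congr
            intro t _
            simp only [Function.comp_apply, id_eq]
            omega
        _ = T' := Finset.image_id
    · intro T hT
      simp only [Finset.mem_filter, Finset.mem_erase, Finset.mem_powerset] at hT
      obtain ⟨⟨hne, hsub⟩, hmem, hlb⟩ := hT
      have step2 : ((T.erase (ρ x)).image (· - ρ x)).image (· + ρ x) = T.erase (ρ x) := by
        rw [Finset.image_image]
        calc (T.erase (ρ x)).image ((· + ρ x) ∘ (· - ρ x)) = (T.erase (ρ x)).image id := by
              apply Finset.image_congr
              intro t ht
              have ht' := Finset.mem_coe.1 ht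
              simp only [Finset.mem_erase] at ht'
              have := hlb t ht'.2
              simp only [Function.comp_apply, id_eq]
              omega
          _ = T.erase (ρ x) := Finset.image_id
      rw [step2, Finset.insert_erase hmem]
    · intro T' hT'
      simp only [Finset.mem_powerset] at hT'
      have hnotmem : ρ x ∉ T'.image (· + ρ x) := by
        simp only [Finset.mem_image]
        rintro ⟨t, ht, hteq⟩
        have := hT' ht
        simp only [Finset.mem_Icc] at this
        omega
      have hback : ((insert (ρ x) (T'.image (· + ρ x))).erase (ρ x)).image (· - ρ x) = T' := by
        rw [Finset.erase_insert hnotmem, Finset.image_image]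
        calc T'.image ((· - ρ x) ∘ (· + ρ x)) = T'.image id := by
              apply Finset.image_congr
              intro t _
              simp only [Function.comp_apply, id_eq]
              omega
          _ = T' := Finset.image_id
      rw [hback, mul_smul_comm]
      congr 1
      exact Omega_split h1 h2 T'
  rw [Finset.sum_congr rfl step]
  rw [Finset.sum_comm' (t' := (Icc 1 n).powerset.erase ∅)
    (s' := fun T => (univ.filter (fun x : P => ⊥ < x ∧ x < ⊤)).filter
      (fun x => ρ x ∈ T ∧ ∀ t ∈ T, ρ x ≤ t)) ?hcomm]
  case hcomm =>
    intro x T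
    simp only [Finset.mem_filter, Finset.mem_univ, true_and]
    tauto
  refine Finset.sum_congr rfl fun T hT => ?_
  simp only [Finset.mem_erase, Finset.mem_powerset] at hT
  obtain ⟨hne, hsub⟩ := hT
  have hTne : T.Nonempty := Finset.nonempty_iff_ne_empty.2 hne
  set m := T.min' hTne with hm
  have hset : (univ.filter (fun x : P => ⊥ < x ∧ x < ⊤)).filter
      (fun x => ρ x ∈ T ∧ ∀ t ∈ T, ρ x ≤ t) = univ.filter (fun x : P => ρ x = m) := by
    ext z
    simp only [Finset.mem_filter, Finset.mem_univ, true_and]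
    constructor
    · rintro ⟨_, hzT, hzlb⟩
      exact le_antisymm (hzlb m (T.min'_mem hTne)) (T.min'_le _ hzT)
    · intro hz
      have hmI := hsub (T.min'_mem hTne)
      simp only [Finset.mem_Icc] at hmI
      refine ⟨(rank_iff z).2 (by omega), hz ▸ T.min'_mem hTne, fun t ht => hz ▸ T.min'_le t ht⟩
  rw [hset]
  rw [flagF_decomp P ρ hstrict T m (T.min'_mem hTne) (fun t ht => T.min'_le t ht),
    Finset.sum_smul]
  refine Finset.sum_congr rfl fun x hx => ?_
  simp only [Finset.mem_filter, Finset.mem_univ, true_and] at hx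
  rw [hx]
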